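/- Let 0 < M < L, F_1 > 0 and F_2 < 0. Then for all sufficiently large N_1 and N_2 one can change the value of the piecewise constant force at one or two of the gap points M and L so that a fixed configuration exists with particles at the gap points: there exist real numbers G_M and G_L and a fixed configuration on the circle, for the force F̃ with F̃(x) = F_1 on (0, M), F̃(x) = F_2 on (M, L), F̃(M) = G_M, F̃(L) = G_L, which has the points M and L among its particles, with N_1 + 1 particles in [0, M] and N_2 + 1 particles in [M, L]. -/

import Mathlib

open Real Filter Set Asymptotics

/-- The repulsion force `f(r) = r^{-a}`. -/
noncomputable def fpow (a r : ℝ) : ℝ := r ^ (-a)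

/-- The clockwise gaps of a configuration `x 1 < ... < x N` on the circle of
circumference `L`: `Δ k = x (k+1) - x k` for `1 ≤ k ≤ N-1` and `Δ N = L - x N + x 1`. -/
def cgap (L : ℝ) (N : ℕ) (x : ℕ → ℝ) (k : ℕ) : ℝ :=
  if k < N then x (k + 1) - x k else L - x N + x 1

/-- A configuration of `N` particles on the circle of circumference `L`,
variant with `0 ≤ x 1 < ... < x N < L`. -/
def CircleConfigA (L : ℝ) (N : ℕ) (x : ℕ → ℝ) : Prop :=
  0 ≤ x 1 ∧ (∀ k, 1 ≤ k → k < N → x k < x (k + 1)) ∧ x N < L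

/-- A fixed (critical) configuration on the circle (variant `0 ≤ x 1`, `x N < L`):
`f(Δ (k-1)) + F (x k) - f(Δ k) = 0` for `k = 1, ..., N`, with `Δ 0 = Δ N`. -/
def CircleFixedA (a L : ℝ) (F : ℝ → ℝ) (N : ℕ) (x : ℕ → ℝ) : Prop :=
  CircleConfigA L N x ∧
  ∀ k, 1 ≤ k → k ≤ N →
    fpow a (cgap L N x (if k = 1 then N else k - 1)) + F (x k) - fpow a (cgap L N x k) = 0

/-- A configuration of `N` particles on the circle of circumference `L`,
variant with `0 < x 1 < ... < x N ≤ L`. -/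
def CircleConfigB (L : ℝ) (N : ℕ) (x : ℕ → ℝ) : Prop :=
  0 < x 1 ∧ (∀ k, 1 ≤ k → k < N → x k < x (k + 1)) ∧ x N ≤ L

/-- A fixed (critical) configuration on the circle (variant `0 < x 1`, `x N ≤ L`):
`f(Δ (k-1)) + F (x k) - f(Δ k) = 0` for `k = 1, ..., N`, with `Δ 0 = Δ N`. -/
def CircleFixedB (a L : ℝ) (F : ℝ → ℝ) (N : ℕ) (x : ℕ → ℝ) : Prop :=
  CircleConfigB L N x ∧
  ∀ k, 1 ≤ k → k ≤ N →
    fpow a (cgap L N x (if k = 1 then N else k - 1)) + F (x k) - fpow a (cgap L N x k) = 0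

/-- A fixed configuration of `N` particles on the segment `[0, L]` with constant
force `F`, completely inelastic boundary conditions, and `x 1 = 0`, `x N = L`. -/
def SegmentFixed (a L F : ℝ) (N : ℕ) (x : ℕ → ℝ) : Prop :=
  x 1 = 0 ∧ x N = L ∧ (∀ k, 1 ≤ k → k < N → x k < x (k + 1)) ∧
  (∀ k, 2 ≤ k → k ≤ N - 1 → fpow a (x k - x (k - 1)) + F - fpow a (x (k + 1) - x k) = 0) ∧
  F - fpow a (x 2) ≤ 0 ∧ 0 ≤ F + fpow a (L - x (N - 1))

lemma fpow_rpow_inv {a b : ℝ} (ha : a ≠ 0) (hb : 0 < b) :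
    fpow a (b ^ (-1/a)) = b := by
  unfold fpow
  rw [← Real.rpow_mul hb.le, show (-1/a) * (-a) = 1 by field_simp, Real.rpow_one]

lemma rpow_inv_fpow {a b : ℝ} (ha : a ≠ 0) (hb : 0 < b) :
    (b ^ (-a) : ℝ) ^ (-1/a) = b := by
  rw [← Real.rpow_mul hb.le, show (-a) * (-1/a) = 1 by field_simp, Real.rpow_one]


/-- For `0 < M < L`, `F₁ > 0 > F₂` and all sufficiently large `N₁, N₂`, one can
modify the force at the gap points `M` and `L` so that a fixed configuration exists having
particles at `M` and `L`, with `N₁ + 1` particles in `[0, M]` and `N₂ + 1` in `[M, L]`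
(the particle at `L` is identified with the point `0` of the circle). -/
theorem fixed_configuration_after_adjusting_gap_values (a L M F₁ F₂ : ℝ) (ha : 1 < a)
    (hM : 0 < M) (hML : M < L) (hF₁ : 0 < F₁) (hF₂ : F₂ < 0) :
    ∃ N₀ : ℕ, ∀ N₁ ≥ N₀, ∀ N₂ ≥ N₀,
      ∃ G_M G_L : ℝ, ∃ x : ℕ → ℝ,
        CircleFixedB a L
          (fun y => if y = M then G_M else if y = L then G_L else if y < M then F₁ else F₂)
          (N₁ + N₂) x ∧
        x N₁ = M ∧ x (N₁ + N₂) = L := by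
  have ha0 : a ≠ 0 := by positivity
  have hapos : (0:ℝ) < a := by linarith
  have hexp : (-1/a : ℝ) ≤ 0 := by
    rw [neg_div]; exact neg_nonpos.mpr (one_div_nonneg.mpr hapos.le)
  refine ⟨1, ?_⟩
  intro N₁ hN₁ N₂ hN₂
  have hN₁0 : 0 < N₁ := hN₁
  have hN₂0 : 0 < N₂ := hN₂
  have hN₁R : (1:ℝ) ≤ (N₁:ℝ) := by exact_mod_cast hN₁
  have hN₂R : (1:ℝ) ≤ (N₂:ℝ) := by exact_mod_cast hN₂
  set N := N₁ + N₂ with hNdef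
  have hN2 : 2 ≤ N := by omega
  have hLM : 0 < L - M := by linarith
  -- Step 1 : choose t for the first arc
  obtain ⟨t, ht, htval⟩ :
      ∃ t : ℝ, 0 < t ∧ ∑ i ∈ Finset.range N₁, (t ^ (-a) + (i:ℝ) * F₁) ^ (-1/a) = M := by
    set t₀ : ℝ := M / (2 * N₁) with ht₀def
    have ht₀ : 0 < t₀ := by positivity
    have ht₀M : t₀ ≤ M := by
      rw [ht₀def, div_le_iff₀ (by positivity)]
      nlinarith
    set S : ℝ → ℝ := fun t => ∑ i ∈ Finset.range N₁, (t ^ (-a) + (i:ℝ) * F₁) ^ (-1/a)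
      with hSdef
    have hbase : ∀ u : ℝ, 0 < u → ∀ i : ℕ, (0:ℝ) < u ^ (-a) + (i:ℝ) * F₁ := by
      intro u hu i
      have := Real.rpow_pos_of_pos hu (-a)
      positivity
    have hScont : ContinuousOn S (Icc t₀ M) := by
      apply continuousOn_finset_sum
      intro i _
      have h1 : ContinuousOn (fun u : ℝ => u ^ (-a)) (Icc t₀ M) := fun u hu =>
        (Real.continuousAt_rpow_const u (-a)
          (Or.inl (ne_of_gt (lt_of_lt_of_le ht₀ hu.1)))).continuousWithinAt
      exact (h1.add continuousOn_const).rpow_const fun u hu =>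
        Or.inl (ne_of_gt (hbase u (lt_of_lt_of_le ht₀ hu.1) i))
    have hS_low : S t₀ ≤ M / 2 := by
      have hbd : ∀ i ∈ Finset.range N₁, (t₀ ^ (-a) + (i:ℝ) * F₁) ^ (-1/a) ≤ t₀ := by
        intro i _
        have h1 : t₀ ^ (-a) ≤ t₀ ^ (-a) + (i:ℝ) * F₁ := le_add_of_nonneg_right (by positivity)
        calc (t₀ ^ (-a) + (i:ℝ) * F₁) ^ (-1/a)
            ≤ (t₀ ^ (-a)) ^ (-1/a) :=
              Real.rpow_le_rpow_of_nonpos (Real.rpow_pos_of_pos ht₀ (-a)) h1 hexp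
          _ = t₀ := rpow_inv_fpow ha0 ht₀
      have h2 := Finset.sum_le_card_nsmul (Finset.range N₁) _ t₀ hbd
      simp only [Finset.card_range, nsmul_eq_mul] at h2
      calc S t₀ ≤ (N₁:ℝ) * t₀ := h2
        _ = M / 2 := by rw [ht₀def]; field_simp
    have hS_high : M ≤ S M := by
      have hle := Finset.single_le_sum
        (f := fun i : ℕ => (M ^ (-a) + (i:ℝ) * F₁) ^ (-1/a))
        (fun i _ => Real.rpow_nonneg (hbase M hM i).le _) (Finset.mem_range.mpr hN₁0)
      simp only [Nat.cast_zero, zero_mul, add_zero] at hle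
      rwa [rpow_inv_fpow ha0 hM] at hle
    have hmem : M ∈ Icc (S t₀) (S M) := ⟨by linarith, hS_high⟩
    obtain ⟨t, htmem, htv⟩ := intermediate_value_Icc ht₀M hScont hmem
    exact ⟨t, lt_of_lt_of_le ht₀ htmem.1, htv⟩
  -- Step 2 : choose s for the second arc
  obtain ⟨s, hspos, hsval⟩ :
      ∃ s : ℝ, (∀ j : ℕ, j < N₂ → (0:ℝ) < s + (j:ℝ) * F₂) ∧
        ∑ j ∈ Finset.range N₂, (s + (j:ℝ) * F₂) ^ (-1/a) = L - M := by
    set c : ℝ := ((N₂:ℝ) - 1) * (-F₂) with hcdef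
    have hc : 0 ≤ c := mul_nonneg (by linarith) (by linarith)
    set u : ℝ := (L - M) / (2 * N₂) with hudef
    have hu : 0 < u := by positivity
    have huLM : u ≤ L - M := by
      rw [hudef, div_le_iff₀ (by positivity)]
      nlinarith
    set s₀ : ℝ := c + (L - M) ^ (-a) with hs₀def
    set s₁ : ℝ := c + u ^ (-a) with hs₁def
    have hs₀s₁ : s₀ ≤ s₁ :=
      by have h := Real.rpow_le_rpow_of_nonpos hu huLM (by linarith : -a ≤ 0); linarith
    have hbase : ∀ v : ℝ, s₀ ≤ v → ∀ j : ℕ, j < N₂ → (L - M) ^ (-a) ≤ v + (j:ℝ) * F₂ := by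
      intro v hv j hj
      have hjc : (j:ℝ) ≤ (N₂:ℝ) - 1 := by
        have : ((j:ℝ) + 1) ≤ (N₂:ℝ) := by exact_mod_cast hj
        linarith
      have hprod : 0 ≤ ((N₂:ℝ) - 1 - (j:ℝ)) * (-F₂) :=
        mul_nonneg (by linarith) (by linarith)
      rw [hs₀def, hcdef] at hv
      nlinarith
    have hLMpow : (0:ℝ) < (L - M) ^ (-a) := Real.rpow_pos_of_pos hLM _
    have hTcont : ContinuousOn
        (fun v : ℝ => ∑ j ∈ Finset.range N₂, (v + (j:ℝ) * F₂) ^ (-1/a)) (Icc s₀ s₁) := by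
      apply continuousOn_finset_sum
      intro j hj
      refine ((continuous_id.add continuous_const).continuousOn).rpow_const fun v hv => Or.inl ?_
      exact ne_of_gt (lt_of_lt_of_le hLMpow (hbase v hv.1 j (Finset.mem_range.mp hj)))
    have hT_high : L - M ≤ ∑ j ∈ Finset.range N₂, (s₀ + (j:ℝ) * F₂) ^ (-1/a) := by
      have hnn : ∀ j ∈ Finset.range N₂, (0:ℝ) ≤ (s₀ + (j:ℝ) * F₂) ^ (-1/a) := fun j hj =>
        Real.rpow_nonneg (le_trans hLMpow.le (hbase s₀ le_rfl j (Finset.mem_range.mp hj))) _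
      have hle := Finset.single_le_sum hnn (Finset.mem_range.mpr (Nat.sub_lt hN₂0 one_pos))
      have hcast : ((N₂ - 1 : ℕ) : ℝ) = (N₂:ℝ) - 1 := by
        rw [Nat.cast_sub hN₂]; norm_num
      have hkey : s₀ + ((N₂ - 1 : ℕ) : ℝ) * F₂ = (L - M) ^ (-a) := by
        rw [hcast, hs₀def, hcdef]; ring
      rwa [hkey, rpow_inv_fpow ha0 hLM] at hle
    have hT_low : ∑ j ∈ Finset.range N₂, (s₁ + (j:ℝ) * F₂) ^ (-1/a) ≤ (L - M) / 2 := by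
      have hbd : ∀ j ∈ Finset.range N₂, (s₁ + (j:ℝ) * F₂) ^ (-1/a) ≤ u := by
        intro j hj
        have hjc : (j:ℝ) ≤ (N₂:ℝ) - 1 := by
          have : ((j:ℝ) + 1) ≤ (N₂:ℝ) := by exact_mod_cast Finset.mem_range.mp hj
          linarith
        have hprod : 0 ≤ ((N₂:ℝ) - 1 - (j:ℝ)) * (-F₂) :=
          mul_nonneg (by linarith) (by linarith)
        have h1 : u ^ (-a) ≤ s₁ + (j:ℝ) * F₂ := by
          rw [hs₁def, hcdef]; nlinarith
        calc (s₁ + (j:ℝ) * F₂) ^ (-1/a)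
            ≤ (u ^ (-a)) ^ (-1/a) :=
              Real.rpow_le_rpow_of_nonpos (Real.rpow_pos_of_pos hu (-a)) h1 hexp
          _ = u := rpow_inv_fpow ha0 hu
      have h2 := Finset.sum_le_card_nsmul (Finset.range N₂) _ u hbd
      simp only [Finset.card_range, nsmul_eq_mul] at h2
      calc ∑ j ∈ Finset.range N₂, (s₁ + (j:ℝ) * F₂) ^ (-1/a) ≤ (N₂:ℝ) * u := h2
        _ = (L - M) / 2 := by rw [hudef]; field_simp
    have hmem : L - M ∈ Icc (∑ j ∈ Finset.range N₂, (s₁ + (j:ℝ) * F₂) ^ (-1/a))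
        (∑ j ∈ Finset.range N₂, (s₀ + (j:ℝ) * F₂) ^ (-1/a)) := ⟨by linarith, hT_high⟩
    obtain ⟨s, hsmem, hsv⟩ := intermediate_value_Icc' hs₀s₁ hTcont hmem
    refine ⟨s, fun j hj => lt_of_lt_of_le hLMpow (hbase s hsmem.1 j hj), hsv⟩
  -- the configuration
  have hbase1 : ∀ i : ℕ, (0:ℝ) < t ^ (-a) + (i:ℝ) * F₁ := by
    intro i
    have := Real.rpow_pos_of_pos ht (-a)
    positivity
  set g : ℕ → ℝ := fun k =>
    if k < N₁ then (t ^ (-a) + (k:ℝ) * F₁) ^ (-1/a)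
    else (s + ((k - N₁ : ℕ):ℝ) * F₂) ^ (-1/a) with hgdef
  set x : ℕ → ℝ := fun k => ∑ i ∈ Finset.range k, g i with hxdef
  set fv : ℕ → ℝ := fun k =>
    if k < N₁ then t ^ (-a) + (k:ℝ) * F₁ else s + ((k - N₁ : ℕ):ℝ) * F₂ with hfvdef
  have hg1 : ∀ k, k < N₁ → g k = (t ^ (-a) + (k:ℝ) * F₁) ^ (-1/a) := by
    intro k hk; rw [hgdef]; exact if_pos hk
  have hg2 : ∀ j : ℕ, g (N₁ + j) = (s + (j:ℝ) * F₂) ^ (-1/a) := by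
    intro j; rw [hgdef]
    simp only [if_neg (by omega : ¬ (N₁ + j < N₁)), Nat.add_sub_cancel_left]
  have hgpos : ∀ k, k < N → 0 < g k := by
    intro k hk
    rcases lt_or_ge k N₁ with h | h
    · rw [hg1 k h]; exact Real.rpow_pos_of_pos (hbase1 k) _
    · obtain ⟨j, rfl⟩ : ∃ j, k = N₁ + j := ⟨k - N₁, by omega⟩
      rw [hg2 j]; exact Real.rpow_pos_of_pos (hspos j (by omega)) _
  have hfg : ∀ k, k < N → fpow a (g k) = fv k := by
    intro k hk
    rcases lt_or_ge k N₁ with h | h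
    · rw [hg1 k h, fpow_rpow_inv ha0 (hbase1 k), hfvdef]
      exact (if_pos h).symm
    · obtain ⟨j, rfl⟩ : ∃ j, k = N₁ + j := ⟨k - N₁, by omega⟩
      rw [hg2 j, fpow_rpow_inv ha0 (hspos j (by omega)), hfvdef]
      simp only [if_neg (by omega : ¬ (N₁ + j < N₁)), Nat.add_sub_cancel_left]
  have hxstep : ∀ k, x (k + 1) = x k + g k := by
    intro k; rw [hxdef]; exact Finset.sum_range_succ g k
  have hx0 : x 0 = 0 := by rw [hxdef]; exact Finset.sum_range_zero g
  have hmono : ∀ i j : ℕ, i < j → j ≤ N → x i < x j := by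
    intro i j hij hjN
    rw [hxdef]
    refine Finset.sum_lt_sum_of_subset (Finset.range_subset_range.mpr hij.le)
      (Finset.mem_range.mpr hij) (by simp) (hgpos i (lt_of_lt_of_le hij hjN)) ?_
    intro m hm _
    exact (hgpos m (lt_of_lt_of_le (Finset.mem_range.mp hm) hjN)).le
  have hxN₁ : x N₁ = M := by
    rw [hxdef]
    calc ∑ i ∈ Finset.range N₁, g i
        = ∑ i ∈ Finset.range N₁, (t ^ (-a) + (i:ℝ) * F₁) ^ (-1/a) :=
          Finset.sum_congr rfl fun i hi => hg1 i (Finset.mem_range.mp hi)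
      _ = M := htval
  have hxN : x N = L := by
    rw [hxdef]
    show ∑ i ∈ Finset.range (N₁ + N₂), g i = L
    rw [Finset.sum_range_add]
    have h1 : ∑ i ∈ Finset.range N₁, g i = M := hxN₁
    have h2 : ∑ j ∈ Finset.range N₂, g (N₁ + j) = L - M := by
      calc ∑ j ∈ Finset.range N₂, g (N₁ + j)
          = ∑ j ∈ Finset.range N₂, (s + (j:ℝ) * F₂) ^ (-1/a) :=
            Finset.sum_congr rfl fun j _ => hg2 j
        _ = L - M := hsval
    rw [h1, h2]; ring
  have hx1g : x 1 = g 0 := by rw [hxdef]; exact Finset.sum_range_one (f := g)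
  have hx1pos : 0 < x 1 := by
    rw [hx1g]; exact hgpos 0 (by omega)
  -- fpow of the gaps
  have hΦ : ∀ m, m < N → fpow a (cgap L N x m) = fv m := by
    intro m hm
    unfold cgap
    rw [if_pos hm, hxstep m, show x m + g m - x m = g m by ring]
    exact hfg m hm
  have hΦN : fpow a (cgap L N x N) = fv 0 := by
    unfold cgap
    rw [if_neg (lt_irrefl N), hxN, hx1g, show L - L + g 0 = g 0 by ring]
    exact hfg 0 (by omega)
  refine ⟨fv N₁ - fv (N₁ - 1), fv 0 - fv (N - 1), x,
    ⟨⟨hx1pos, fun k hk1 hkN => hmono k (k + 1) (by omega) (by omega), le_of_eq hxN⟩, ?_⟩,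
    hxN₁, hxN⟩
  intro k hk1 hkN
  simp only []
  by_cases hkN' : k = N
  · -- particle at L
    subst hkN'
    rw [if_neg (by omega : ¬ N = 1), hΦN, hΦ (N - 1) (by omega), hxN]
    rw [if_neg (by intro h; exact absurd h (by linarith : L ≠ M)), if_pos rfl]
    ring
  · have hkN'' : k < N := lt_of_le_of_ne hkN hkN'
    rw [hΦ k hkN'']
    by_cases hk1' : k = 1
    · subst hk1'
      rw [if_pos rfl, hΦN]
      by_cases hN₁1 : N₁ = 1
      · have hx1M : x 1 = M := by rw [hN₁1] at hxN₁; exact hxN₁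
        rw [hx1M, if_pos rfl, hN₁1]
        norm_num
      · have h1N₁ : 1 < N₁ := by omega
        have hx1M : x 1 < M := by rw [← hxN₁]; exact hmono 1 N₁ h1N₁ (by omega)
        rw [if_neg (ne_of_lt hx1M), if_neg (by linarith : x 1 ≠ L), if_pos hx1M]
        rw [hfvdef]
        simp only [if_pos (by omega : 0 < N₁), if_pos h1N₁]
        push_cast
        ring
    · obtain ⟨i, rfl⟩ : ∃ i, k = i + 1 := ⟨k - 1, by omega⟩
      have hi1 : 1 ≤ i := by omega
      rw [if_neg hk1', show i + 1 - 1 = i by omega,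
        hΦ i (by omega)]
      by_cases hkM : i + 1 = N₁
      · have hxM : x (i + 1) = M := by rw [hkM]; exact hxN₁
        rw [hxM, if_pos rfl, hkM, show N₁ - 1 = i by omega]
        ring
      · rcases lt_or_gt_of_ne hkM with h | h
        · -- interior of (0, M)
          have hxlt : x (i + 1) < M := by rw [← hxN₁]; exact hmono (i + 1) N₁ h (by omega)
          rw [if_neg (ne_of_lt hxlt), if_neg (by linarith : x (i + 1) ≠ L), if_pos hxlt]
          rw [hfvdef]
          simp only [if_pos (by omega : i < N₁), if_pos h]
          push_cast
          ring
        · -- interior of (M, L)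
          have hxgt : M < x (i + 1) := by rw [← hxN₁]; exact hmono N₁ (i + 1) h (by omega)
          have hxlt : x (i + 1) < L := by rw [← hxN]; exact hmono (i + 1) N (by omega) le_rfl
          rw [if_neg (ne_of_gt hxgt), if_neg (ne_of_lt hxlt), if_neg (by linarith : ¬ x (i + 1) < M)]
          rw [hfvdef]
          simp only [if_neg (by omega : ¬ i < N₁), if_neg (by omega : ¬ i + 1 < N₁)]
          have hcast : ((i + 1 - N₁ : ℕ) : ℝ) = ((i - N₁ : ℕ) : ℝ) + 1 := by
            have : i + 1 - N₁ = (i - N₁) + 1 := by omega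
            rw [this]; push_cast; ring
          rw [hcast]
          ring
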